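/- Let v(x, y) = −4xy·log(x² + y²) + 2(x² − y²)·(π/2 − 2·arctan(y/x)) − π(x² + y²), defined for (x, y) ∈ ℝ² with x ≠ 0. Then v is twice continuously differentiable on {x ≠ 0} and satisfies ∂²v/∂x² + ∂²v/∂y² = −4π at every point with x ≠ 0. -/

import Mathlib

open Real

noncomputable section

/-- `v(x,y) = −4xy ln(x²+y²) + 2(x²−y²)(π/2 − 2 arctan(y/x)) − π(x²+y²)`. -/
def vfun (x y : ℝ) : ℝ :=
  -4 * x * y * Real.log (x ^ 2 + y ^ 2)
    + 2 * (x ^ 2 - y ^ 2) * (π / 2 - 2 * Real.arctan (y / x))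
    - π * (x ^ 2 + y ^ 2)

lemma hd_sq_add (c s : ℝ) : HasDerivAt (fun t : ℝ => t ^ 2 + c) (2 * s) s := by
  simpa using (hasDerivAt_pow 2 s).add_const c

lemma hd_add_sq (c s : ℝ) : HasDerivAt (fun t : ℝ => c + t ^ 2) (2 * s) s := by
  simpa using (hasDerivAt_pow 2 s).const_add c

lemma hd_arc1 (y s : ℝ) (hs : s ≠ 0) :
    HasDerivAt (fun t : ℝ => Real.arctan (y / t))
      ((y * -(s ^ 2)⁻¹) / (1 + (y / s) ^ 2)) s := by
  have hdiv : HasDerivAt (fun t : ℝ => y / t) (y * -(s ^ 2)⁻¹) s := by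
    simpa [div_eq_mul_inv] using (hasDerivAt_inv hs).const_mul y
  convert hdiv.arctan using 1; ring

lemma hd_arc2 (x s : ℝ) :
    HasDerivAt (fun t : ℝ => Real.arctan (t / x)) ((1 / x) / (1 + (s / x) ^ 2)) s := by
  have hdiv : HasDerivAt (fun t : ℝ => t / x) (1 / x) s := by
    simpa using (hasDerivAt_id s).div_const x
  convert hdiv.arctan using 1; ring

lemma hasDerivAt_vx (y s : ℝ) (hs : s ≠ 0) :
    HasDerivAt (fun t => vfun t y)
      (-4 * y * Real.log (s ^ 2 + y ^ 2) - 8 * s * Real.arctan (y / s) - 4 * y) s := by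
  have hr : s ^ 2 + y ^ 2 ≠ 0 := by positivity
  have hr1 : 1 + (y / s) ^ 2 ≠ 0 := by positivity
  have hlog : HasDerivAt (fun t : ℝ => Real.log (t ^ 2 + y ^ 2))
      (2 * s / (s ^ 2 + y ^ 2)) s := (hd_sq_add (y ^ 2) s).log hr
  have harc := hd_arc1 y s hs
  have H :=
    (((((hasDerivAt_id s).const_mul (-4)).mul_const y).mul hlog).add
      ((((hasDerivAt_pow 2 s).sub_const (y ^ 2)).const_mul 2).mul
        ((harc.const_mul 2).const_sub (π / 2)))).sub ((hd_sq_add (y ^ 2) s).const_mul π)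
  have heq : (fun t : ℝ => vfun t y) =
      fun t => -4 * t * y * Real.log (t ^ 2 + y ^ 2)
        + 2 * (t ^ 2 - y ^ 2) * (π / 2 - 2 * Real.arctan (y / t)) - π * (t ^ 2 + y ^ 2) := by
    funext t; simp [vfun]
  rw [heq]
  refine H.congr_deriv ?_
  simp only [id_eq]
  field_simp
  ring

lemma hasDerivAt_vy (x : ℝ) (hx : x ≠ 0) (s : ℝ) :
    HasDerivAt (fun t => vfun x t)
      (-4 * x * Real.log (x ^ 2 + s ^ 2)
        - 4 * s * (π / 2 - 2 * Real.arctan (s / x)) - 2 * π * s - 4 * x) s := by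
  have hr : x ^ 2 + s ^ 2 ≠ 0 := by positivity
  have hr1 : 1 + (s / x) ^ 2 ≠ 0 := by positivity
  have hlog : HasDerivAt (fun t : ℝ => Real.log (x ^ 2 + t ^ 2))
      (2 * s / (x ^ 2 + s ^ 2)) s := (hd_add_sq (x ^ 2) s).log hr
  have harc := hd_arc2 x s
  have H :=
    (((((hasDerivAt_id s).const_mul (-4 * x)).mul hlog)).add
      ((((hasDerivAt_pow 2 s).const_sub (x ^ 2)).const_mul 2).mul
        ((harc.const_mul 2).const_sub (π / 2)))).sub ((hd_add_sq (x ^ 2) s).const_mul π)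
  have heq : (fun t : ℝ => vfun x t) =
      fun t => -4 * x * t * Real.log (x ^ 2 + t ^ 2)
        + 2 * (x ^ 2 - t ^ 2) * (π / 2 - 2 * Real.arctan (t / x)) - π * (x ^ 2 + t ^ 2) := by
    funext t; simp [vfun]
  rw [heq]
  have heq2 : (fun t : ℝ => -4 * x * t * Real.log (x ^ 2 + t ^ 2)
        + 2 * (x ^ 2 - t ^ 2) * (π / 2 - 2 * Real.arctan (t / x)) - π * (x ^ 2 + t ^ 2)) =
      fun t : ℝ => (-4 * x) * t * Real.log (x ^ 2 + t ^ 2)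
        + 2 * (x ^ 2 - t ^ 2) * (π / 2 - 2 * Real.arctan (t / x)) - π * (x ^ 2 + t ^ 2) := by
    funext t; ring_nf
  rw [heq2]
  refine H.congr_deriv ?_
  simp only [id_eq]
  field_simp
  ring

lemma hasDerivAt_gx (y x : ℝ) (hx : x ≠ 0) :
    HasDerivAt
      (fun s => -4 * y * Real.log (s ^ 2 + y ^ 2) - 8 * s * Real.arctan (y / s) - 4 * y)
      (-8 * Real.arctan (y / x)) x := by
  have hr : x ^ 2 + y ^ 2 ≠ 0 := by positivity
  have hr1 : 1 + (y / x) ^ 2 ≠ 0 := by positivity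
  have hlog : HasDerivAt (fun t : ℝ => Real.log (t ^ 2 + y ^ 2))
      (2 * x / (x ^ 2 + y ^ 2)) x := (hd_sq_add (y ^ 2) x).log hr
  have harc := hd_arc1 y x hx
  have H := ((hlog.const_mul (-4 * y)).sub
      (((hasDerivAt_id x).const_mul 8).mul harc)).sub_const (4 * y)
  refine H.congr_deriv ?_
  simp only [id_eq]
  field_simp
  ring

lemma hasDerivAt_gy (x y : ℝ) (hx : x ≠ 0) :
    HasDerivAt
      (fun s => -4 * x * Real.log (x ^ 2 + s ^ 2)
        - 4 * s * (π / 2 - 2 * Real.arctan (s / x)) - 2 * π * s - 4 * x)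
      (-4 * π + 8 * Real.arctan (y / x)) y := by
  have hr : x ^ 2 + y ^ 2 ≠ 0 := by positivity
  have hr1 : 1 + (y / x) ^ 2 ≠ 0 := by positivity
  have hlog : HasDerivAt (fun t : ℝ => Real.log (x ^ 2 + t ^ 2))
      (2 * y / (x ^ 2 + y ^ 2)) y := (hd_add_sq (x ^ 2) y).log hr
  have harc := hd_arc2 x y
  have H := (((hlog.const_mul (-4 * x)).sub
      ((((hasDerivAt_id y).const_mul 4)).mul
        ((harc.const_mul 2).const_sub (π / 2)))).sub
      (((hasDerivAt_id y).const_mul (2 * π)))).sub_const (4 * x)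
  refine H.congr_deriv ?_
  simp only [id_eq]
  field_simp
  ring

/-- `v` is `C²` on `{x ≠ 0}` and satisfies `Δv = −4π` there. -/
theorem statement14 :
    ContDiffOn ℝ 2 (fun p : ℝ × ℝ => vfun p.1 p.2) {p : ℝ × ℝ | p.1 ≠ 0} ∧
    ∀ x y : ℝ, x ≠ 0 →
      deriv (fun s => deriv (fun t => vfun t y) s) x
        + deriv (fun s => deriv (fun t => vfun x t) s) y = -4 * π := by
  constructor
  · set S : Set (ℝ × ℝ) := {p : ℝ × ℝ | p.1 ≠ 0} with hS
    have hfst : ContDiffOn ℝ 2 (fun p : ℝ × ℝ => p.1) S := contDiff_fst.contDiffOn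
    have hsnd : ContDiffOn ℝ 2 (fun p : ℝ × ℝ => p.2) S := contDiff_snd.contDiffOn
    have hsq : ContDiffOn ℝ 2 (fun p : ℝ × ℝ => p.1 ^ 2 + p.2 ^ 2) S :=
      (hfst.pow 2).add (hsnd.pow 2)
    have hsqne : ∀ p ∈ S, (p : ℝ × ℝ).1 ^ 2 + p.2 ^ 2 ≠ 0 := by
      intro p hp
      have : p.1 ≠ 0 := hp
      positivity
    have hlog : ContDiffOn ℝ 2 (fun p : ℝ × ℝ => Real.log (p.1 ^ 2 + p.2 ^ 2)) S :=
      hsq.log hsqne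
    have hdiv : ContDiffOn ℝ 2 (fun p : ℝ × ℝ => p.2 / p.1) S :=
      hsnd.div hfst fun p hp => hp
    have harc : ContDiffOn ℝ 2 (fun p : ℝ × ℝ => Real.arctan (p.2 / p.1)) S :=
      (Real.contDiff_arctan.of_le le_top).comp_contDiffOn hdiv
    have : ContDiffOn ℝ 2 (fun p : ℝ × ℝ =>
        -4 * p.1 * p.2 * Real.log (p.1 ^ 2 + p.2 ^ 2)
          + 2 * (p.1 ^ 2 - p.2 ^ 2) * (π / 2 - 2 * Real.arctan (p.2 / p.1))
          - π * (p.1 ^ 2 + p.2 ^ 2)) S := by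
      exact ((((contDiffOn_const.mul hfst).mul hsnd).mul hlog).add
        (((contDiffOn_const.mul ((hfst.pow 2).sub (hsnd.pow 2)))).mul
          (contDiffOn_const.sub (contDiffOn_const.mul harc)))).sub
        (contDiffOn_const.mul hsq)
    exact this.congr fun p hp => by simp [vfun]
  · intro x y hx
    have h1 : deriv (fun s => deriv (fun t => vfun t y) s) x = -8 * Real.arctan (y / x) := by
      have hev : (fun s => deriv (fun t => vfun t y) s) =ᶠ[nhds x]
          (fun s => -4 * y * Real.log (s ^ 2 + y ^ 2)
            - 8 * s * Real.arctan (y / s) - 4 * y) := by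
        filter_upwards [eventually_ne_nhds hx] with s hs
        exact (hasDerivAt_vx y s hs).deriv
      rw [hev.deriv_eq, (hasDerivAt_gx y x hx).deriv]
    have h2 : deriv (fun s => deriv (fun t => vfun x t) s) y
        = -4 * π + 8 * Real.arctan (y / x) := by
      have heq : (fun s => deriv (fun t => vfun x t) s) =
          (fun s => -4 * x * Real.log (x ^ 2 + s ^ 2)
            - 4 * s * (π / 2 - 2 * Real.arctan (s / x)) - 2 * π * s - 4 * x) :=
        funext fun s => (hasDerivAt_vy x hx s).deriv
      rw [heq, (hasDerivAt_gy x y hx).deriv]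
    rw [h1, h2]; ring
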